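/- Let (T_k)_{k≥1} be a sequence of random N-ary recursive trees. For every k ≥ 1, every N-tuple i = (i_1,…,i_N) of non-negative integers with i_1+…+i_N = k−1, the vector of subtree sizes satisfies P{|T_k^{(1)}| = i_1, …, |T_k^{(N)}| = i_N} = p_k(i) where p_k(i) = ( (k−1)! / (i_1!⋯i_N!) ) · ( ∏_{l=1}^N ∏_{m=0}^{i_l−1} f_m ) / ( ∏_{r=0}^{k−1} f_r ), with f_m = (N−1)m+1 and the empty product equal to 1. Moreover, for every N-ary tree t of size k with subtrees t^{(1)},…,t^{(N)} of sizes i_1,…,i_N, one has P{T_k^{(1)} = t^{(1)}, …, T_k^{(N)} = t^{(N)} | |T_k^{(j)}| = i_j for all j} = ∏_{j=1}^N P{T_{i_j} = t^{(j)}}; that is, conditionally on the subtree sizes, the N subtrees of the root are independent random recursive trees of the given sizes. -/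

import Mathlib

open MeasureTheory ProbabilityTheory Filter Finset
open scoped ENNReal NNReal

namespace KacNary

/-- Nodes of the infinite `N`-ary tree: finite strings over `{0,…,N-1}`. -/
abbrev Node (N : ℕ) := List (Fin N)

/-- Number of leaves of an `N`-ary tree of size `k`:  `f_k = (N-1)k+1`. -/
def nleaves (N k : ℕ) : ℕ := (N - 1) * k + 1

/-- The set of leaves of the `N`-ary tree whose set of internal nodes is `s`. -/
def leavesOf {N : ℕ} (s : Finset (Node N)) : Finset (Node N) :=
  if s = ∅ then {([] : Node N)}
  else (s.biUnion fun v => (Finset.univ : Finset (Fin N)).image fun j => v ++ [j]) \ s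

/-- One admissible step of the growth process: a leaf of `s` becomes an internal node. -/
def Step {N : ℕ} (s s' : Finset (Node N)) : Prop :=
  ∃ v ∈ leavesOf s, s' = insert v s

/-- The set of internal nodes of the `j`-th root subtree. -/
def subtree {N : ℕ} (s : Finset (Node N)) (j : Fin N) : Finset (Node N) :=
  (s.filter fun v => v.head? = some j).image List.tail

/-- `s` is (the set of internal nodes of) an `N`-ary tree: it is closed under parents. -/
def IsTree {N : ℕ} (s : Finset (Node N)) : Prop :=
  ∀ v ∈ s, ∀ (w : Node N) (j : Fin N), v = w ++ [j] → w ∈ s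

/-- `p_k(i) = ((k-1)!/(i_1!⋯i_N!)) ∏_{l=1}^N ∏_{m=0}^{i_l-1} f_m / ∏_{r=0}^{k-1} f_r`. -/
noncomputable def pk (N k : ℕ) (i : Fin N → ℕ) : ℝ≥0∞ :=
  ((Nat.factorial (k - 1) * ∏ l, ∏ m ∈ Finset.range (i l), nleaves N m : ℕ) : ℝ≥0∞) /
    (((∏ l, Nat.factorial (i l)) * ∏ r ∈ Finset.range k, nleaves N r : ℕ) : ℝ≥0∞)


variable {N : ℕ}


/-- children of internal nodes -/
def children (s : Finset (Node N)) : Finset (Node N) :=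
  s.biUnion fun v => (Finset.univ : Finset (Fin N)).image fun j => v ++ [j]

lemma mem_children {s : Finset (Node N)} {v : Node N} :
    v ∈ children s ↔ ∃ u ∈ s, ∃ j : Fin N, v = u ++ [j] := by
  simp [children, eq_comm]

lemma leavesOf_empty : leavesOf (∅ : Finset (Node N)) = {([] : Node N)} := by
  simp [leavesOf]

lemma leavesOf_of_ne {s : Finset (Node N)} (hs : s ≠ ∅) :
    leavesOf s = children s \ s := by
  simp [leavesOf, hs, children]

lemma leaf_not_mem {s : Finset (Node N)} {v : Node N} (hv : v ∈ leavesOf s) : v ∉ s := by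
  by_cases hs : s = ∅
  · subst hs; simp
  · rw [leavesOf_of_ne hs] at hv
    exact (Finset.mem_sdiff.1 hv).2

lemma root_mem {s : Finset (Node N)} (ht : IsTree s) (hs : s ≠ ∅) : ([] : Node N) ∈ s := by
  obtain ⟨v, hv⟩ := Finset.nonempty_iff_ne_empty.2 hs
  -- induct on length of v
  have : ∀ (n : ℕ) (v : Node N), v.length ≤ n → v ∈ s → ([] : Node N) ∈ s := by
    intro n
    induction n with
    | zero =>
      intro v hl hv
      cases v with
      | nil => exact hv
      | cons a t => simp at hl
    | succ n ih =>
      intro v hl hv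
      rcases eq_or_ne v ([] : Node N) with rfl | hne
      · exact hv
      · have hdec : v.dropLast ++ [v.getLast hne] = v := List.dropLast_append_getLast hne
        have hmem : v.dropLast ∈ s := ht v hv _ _ hdec.symm
        have : v.dropLast.length ≤ n := by
          have : v.dropLast.length = v.length - 1 := List.length_dropLast
          have hvpos : 0 < v.length := List.length_pos_iff.2 hne
          omega
        exact ih _ this hmem
  exact this v.length v le_rfl hv

lemma concat_eq_cons {u : List (Fin N)} {r j : Fin N} {w : List (Fin N)} :
    u ++ [r] = j :: w ↔ (u = [] ∧ w = [] ∧ r = j) ∨ ∃ u', u = j :: u' ∧ w = u' ++ [r] := by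
  constructor
  · intro h
    cases u with
    | nil =>
      simp at h
      exact Or.inl ⟨rfl, h.2, h.1⟩
    | cons a u' =>
      simp at h
      exact Or.inr ⟨u', by simp [h.1], h.2.symm⟩
  · rintro (⟨rfl, rfl, rfl⟩ | ⟨u', rfl, rfl⟩) <;> simp

lemma isTree_insert_leaf {s : Finset (Node N)} (ht : IsTree s) {v : Node N}
    (hv : v ∈ leavesOf s) : IsTree (insert v s) := by
  intro x hx w j hxw
  rcases Finset.mem_insert.1 hx with rfl | hx
  · by_cases hs : s = ∅
    · subst hs
      simp [leavesOf_empty] at hv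
      subst hv
      exact absurd hxw (by simp)
    · rw [leavesOf_of_ne hs] at hv
      obtain ⟨u, hu, j', rfl⟩ := mem_children.1 (Finset.mem_sdiff.1 hv).1
      have hlen : u.length = w.length := by
        have := congrArg List.length hxw
        simp at this; omega
      have : u = w := (List.append_inj hxw hlen).1
      subst this
      exact Finset.mem_insert_of_mem hu
  · exact Finset.mem_insert_of_mem (ht x hx w j hxw)

lemma card_children {s : Finset (Node N)} : (children s).card = N * s.card := by
  rw [children, Finset.card_biUnion]
  · rw [Finset.sum_congr rfl (fun v _ => Finset.card_image_of_injective _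
      (fun a b h => by simpa using h))]
    simp [Finset.card_univ, mul_comm]
  · intro x _ y _ hxy
    simp only [Finset.disjoint_left, Finset.mem_image]
    rintro a ⟨j, -, rfl⟩ ⟨j', -, h⟩
    have : y = x := (List.append_inj h (by
      have := congrArg List.length h
      simp at this; omega)).1
    exact hxy this.symm

lemma children_inter {s : Finset (Node N)} (ht : IsTree s) :
    s ∩ children s = s.erase ([] : Node N) := by
  ext v
  simp only [Finset.mem_inter, Finset.mem_erase, mem_children]
  constructor
  · rintro ⟨hv, u, hu, j, rfl⟩
    exact ⟨by simp, hv⟩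
  · rintro ⟨hne, hv⟩
    refine ⟨hv, v.dropLast, ht v hv _ _ (List.dropLast_append_getLast hne).symm,
      v.getLast hne, (List.dropLast_append_getLast hne).symm⟩

lemma card_leavesOf (hN : 1 ≤ N) {s : Finset (Node N)} (ht : IsTree s) :
    (leavesOf s).card = nleaves N s.card := by
  by_cases hs : s = ∅
  · subst hs; simp [leavesOf_empty, nleaves]
  · have hroot : ([] : Node N) ∈ s := root_mem ht hs
    have h1 : (children s \ s).card + (children s ∩ s).card = (children s).card :=
      Finset.card_sdiff_add_card_inter _ _
    have h2 : children s ∩ s = s.erase ([] : Node N) := by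
      rw [Finset.inter_comm]; exact children_inter ht
    have h3 : (s.erase ([] : Node N)).card = s.card - 1 := Finset.card_erase_of_mem hroot
    have hcard : 1 ≤ s.card := Finset.card_pos.2 (Finset.nonempty_iff_ne_empty.2 hs)
    rw [leavesOf_of_ne hs]
    have h4 := card_children (s := s)
    obtain ⟨m, rfl⟩ : ∃ m, N = m + 1 := ⟨N - 1, by omega⟩
    have hexp : (m+1) * s.card = m * s.card + s.card := by ring
    have h23 : (children s ∩ s).card = s.card - 1 := by rw [h2, h3]
    simp only [nleaves, Nat.add_sub_cancel]
    omega


lemma mem_subtree {s : Finset (Node N)} {j : Fin N} {w : Node N} :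
    w ∈ subtree s j ↔ (j :: w) ∈ s := by
  simp only [subtree, Finset.mem_image, Finset.mem_filter]
  constructor
  · rintro ⟨v, ⟨hv, hh⟩, rfl⟩
    cases v with
    | nil => simp at hh
    | cons a t => simp at hh; subst hh; exact hv
  · intro h
    exact ⟨j :: w, ⟨h, rfl⟩, rfl⟩

lemma isTree_subtree {s : Finset (Node N)} (ht : IsTree s) (j : Fin N) :
    IsTree (subtree s j) := by
  intro v hv w r hw
  rw [mem_subtree] at hv ⊢
  subst hw
  exact ht _ hv (j :: w) r rfl

lemma subtree_insert_cons {s : Finset (Node N)} {j j' : Fin N} {w : Node N} :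
    subtree (insert (j :: w) s) j' =
      if j' = j then insert w (subtree s j') else subtree s j' := by
  split_ifs with h
  · subst h
    ext x
    simp [mem_subtree, Finset.mem_insert]
  · ext x
    simp only [mem_subtree, Finset.mem_insert]
    constructor
    · rintro (hx | hx)
      · cases hx
        · exact absurd rfl h
      · exact hx
    · exact fun hx => Or.inr hx

lemma subtree_singleton_root {j : Fin N} :
    subtree ({([] : Node N)} : Finset (Node N)) j = ∅ := by
  ext x; simp [mem_subtree]

/-- key decomposition of leaves by head. -/
lemma cons_mem_leavesOf {s : Finset (Node N)} (ht : IsTree s) (hroot : ([] : Node N) ∈ s)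
    {j : Fin N} {w : Node N} :
    (j :: w) ∈ leavesOf s ↔ w ∈ leavesOf (subtree s j) := by
  have hs : s ≠ ∅ := Finset.ne_empty_of_mem hroot
  rw [leavesOf_of_ne hs]
  by_cases hsub : subtree s j = ∅
  · rw [hsub, leavesOf_empty]
    simp only [Finset.mem_sdiff, mem_children, Finset.mem_singleton]
    constructor
    · rintro ⟨⟨u, hu, r, hur⟩, hns⟩
      rcases concat_eq_cons.1 hur.symm with ⟨rfl, rfl, rfl⟩ | ⟨u', rfl, rfl⟩
      · rfl
      · exact absurd (mem_subtree.2 hu) (by simp [hsub])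
    · rintro rfl
      refine ⟨⟨[], hroot, j, rfl⟩, fun hmem => ?_⟩
      have : ([] : Node N) ∈ subtree s j := mem_subtree.2 hmem
      rw [hsub] at this
      exact absurd this (Finset.notMem_empty _)
  · have hsubroot : ([] : Node N) ∈ subtree s j := root_mem (isTree_subtree ht j) hsub
    rw [leavesOf_of_ne hsub]
    simp only [Finset.mem_sdiff, mem_children]
    rw [mem_subtree]
    constructor
    · rintro ⟨⟨u, hu, r, hur⟩, hns⟩
      rcases concat_eq_cons.1 hur.symm with ⟨rfl, rfl, rfl⟩ | ⟨u', rfl, rfl⟩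
      · exact absurd (mem_subtree.1 hsubroot) hns
      · exact ⟨⟨u', mem_subtree.2 hu, r, rfl⟩, by simpa [mem_subtree] using hns⟩
    · rintro ⟨⟨u, hu, r, rfl⟩, hns⟩
      exact ⟨⟨j :: u, mem_subtree.1 hu, r, rfl⟩, by simpa [mem_subtree] using hns⟩

lemma ne_nil_of_mem_leavesOf {s : Finset (Node N)} (hroot : ([] : Node N) ∈ s)
    {v : Node N} (hv : v ∈ leavesOf s) : v ≠ [] := by
  intro rfl_; subst rfl_
  exact leaf_not_mem hv hroot

lemma leavesOf_filter_head {s : Finset (Node N)} (ht : IsTree s) (hroot : ([] : Node N) ∈ s)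
    (j : Fin N) :
    (leavesOf s).filter (fun v => v.head? = some j) =
      (leavesOf (subtree s j)).image (j :: ·) := by
  ext v
  simp only [Finset.mem_filter, Finset.mem_image]
  constructor
  · rintro ⟨hv, hh⟩
    cases v with
    | nil => simp at hh
    | cons a t =>
      simp at hh; subst hh
      exact ⟨t, (cons_mem_leavesOf ht hroot).1 hv, rfl⟩
  · rintro ⟨w, hw, rfl⟩
    exact ⟨(cons_mem_leavesOf ht hroot).2 hw, rfl⟩






/-- Admissible histories of length `n`, most recent insertion at the head. -/
def histSet (N : ℕ) : ℕ → Finset (List (Node N))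
  | 0 => {([] : List (Node N))}
  | n + 1 => (histSet N n).biUnion fun l => (leavesOf l.toFinset).image (· :: l)

lemma mem_histSet_succ {n : ℕ} {l' : List (Node N)} :
    l' ∈ histSet N (n + 1) ↔
      ∃ v l, l ∈ histSet N n ∧ v ∈ leavesOf l.toFinset ∧ l' = v :: l := by
  simp only [histSet, Finset.mem_biUnion, Finset.mem_image]
  constructor
  · rintro ⟨l, hl, v, hv, rfl⟩
    exact ⟨v, l, hl, hv, rfl⟩
  · rintro ⟨v, l, hl, hv, rfl⟩
    exact ⟨l, hl, v, hv, rfl⟩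

lemma histSet_facts {n : ℕ} {l : List (Node N)} (hl : l ∈ histSet N n) :
    l.length = n ∧ IsTree l.toFinset ∧ l.toFinset.card = n := by
  induction n generalizing l with
  | zero =>
    simp only [histSet, Finset.mem_singleton] at hl
    subst hl
    refine ⟨rfl, ?_, rfl⟩
    intro v hv; simp at hv
  | succ n ih =>
    obtain ⟨v, l0, hl0, hv, rfl⟩ := mem_histSet_succ.1 hl
    obtain ⟨hlen, htree, hcard⟩ := ih hl0
    have hnot : v ∉ l0.toFinset := leaf_not_mem hv
    refine ⟨by simp [hlen], ?_, ?_⟩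
    · simpa using isTree_insert_leaf htree hv
    · simp only [List.toFinset_cons]
      rw [Finset.card_insert_of_notMem hnot, hcard]

lemma histSet_length {n : ℕ} {l : List (Node N)} (hl : l ∈ histSet N n) : l.length = n :=
  (histSet_facts hl).1

lemma histSet_tree {n : ℕ} {l : List (Node N)} (hl : l ∈ histSet N n) : IsTree l.toFinset :=
  (histSet_facts hl).2.1

lemma histSet_card {n : ℕ} {l : List (Node N)} (hl : l ∈ histSet N n) : l.toFinset.card = n :=
  (histSet_facts hl).2.2

lemma histSet_root {n : ℕ} (hn : 1 ≤ n) {l : List (Node N)} (hl : l ∈ histSet N n) :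
    ([] : Node N) ∈ l.toFinset := by
  apply root_mem (histSet_tree hl)
  have := histSet_card hl
  intro h
  rw [h] at this
  simp at this
  omega

lemma card_histSet (hN : 1 ≤ N) (n : ℕ) :
    (histSet N n).card = ∏ r ∈ Finset.range n, nleaves N r := by
  induction n with
  | zero => simp [histSet]
  | succ n ih =>
    rw [Finset.prod_range_succ, ← ih]
    show ((histSet N n).biUnion _).card = _
    rw [Finset.card_biUnion]
    · rw [Finset.sum_congr rfl fun l hl => ?_]
      · rw [Finset.sum_const, smul_eq_mul]
      · rw [Finset.card_image_of_injective _ fun a b h => (List.cons.injEq .. ▸ h).1,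
          card_leavesOf hN (histSet_tree hl), histSet_card hl]
    · intro x hx y hy hxy
      simp only [Finset.disjoint_left, Finset.mem_image]
      rintro a ⟨v, -, rfl⟩ ⟨w, -, h⟩
      exact hxy ((List.cons.injEq .. ▸ h).2).symm

lemma drop_mem_histSet {n : ℕ} {l : List (Node N)} (hl : l ∈ histSet N n) (m : ℕ) :
    l.drop m ∈ histSet N (n - m) := by
  induction m generalizing n l with
  | zero => simpa using hl
  | succ m ih =>
    cases n with
    | zero =>
      simp only [histSet, Finset.mem_singleton] at hl
      subst hl
      simp [histSet]
    | succ n =>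
      obtain ⟨v, l0, hl0, hv, rfl⟩ := mem_histSet_succ.1 hl
      simpa [Nat.succ_sub_succ] using ih hl0

/-- all suffix-toFinsets equal implies lists equal (within histSet). -/
lemma histSet_ext {n : ℕ} {l l' : List (Node N)} (hl : l ∈ histSet N n)
    (hl' : l' ∈ histSet N n)
    (h : ∀ m, (l.drop m).toFinset = (l'.drop m).toFinset) : l = l' := by
  induction n generalizing l l' with
  | zero =>
    simp only [histSet, Finset.mem_singleton] at hl hl'
    rw [hl, hl']
  | succ n ih =>
    obtain ⟨v, l0, hl0, hv, rfl⟩ := mem_histSet_succ.1 hl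
    obtain ⟨v', l0', hl0', hv', rfl⟩ := mem_histSet_succ.1 hl'
    have htail : l0 = l0' := ih hl0 hl0' fun m => by simpa using h (m + 1)
    subst htail
    have h0 := h 0
    simp only [List.drop_zero, List.toFinset_cons] at h0
    have hvnot : v ∉ l0.toFinset := leaf_not_mem hv
    have hv'not : v' ∉ l0.toFinset := leaf_not_mem hv'
    have : v ∈ insert v' l0.toFinset := h0 ▸ Finset.mem_insert_self v l0.toFinset
    rcases Finset.mem_insert.1 this with rfl | hmem
    · rfl
    · exact absurd hmem hvnot






open scoped Classical in
noncomputable def Ccount (N : ℕ) (m : ℕ) (t : Finset (Node N)) : ℕ :=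
  ((histSet N m).filter fun l => l.toFinset = t).card

def Rem (u : Finset (Node N)) : Finset (Node N) :=
  u.filter fun w => ∀ j : Fin N, w ++ [j] ∉ u

lemma mem_Rem {u : Finset (Node N)} {w : Node N} :
    w ∈ Rem u ↔ w ∈ u ∧ ∀ j : Fin N, w ++ [j] ∉ u := by simp [Rem]

lemma isTree_erase_rem {u : Finset (Node N)} (hu : IsTree u) {w : Node N} (hw : w ∈ Rem u) :
    IsTree (u.erase w) := by
  obtain ⟨hwu, hmax⟩ := mem_Rem.1 hw
  intro v hv p j hp
  have hvu : v ∈ u := Finset.mem_of_mem_erase hv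
  have hpu : p ∈ u := hu v hvu p j hp
  refine Finset.mem_erase.2 ⟨?_, hpu⟩
  rintro rfl
  exact hmax j (hp ▸ hvu)

lemma rem_mem_leavesOf_erase {u : Finset (Node N)} (hu : IsTree u) {w : Node N}
    (hw : w ∈ Rem u) : w ∈ leavesOf (u.erase w) := by
  obtain ⟨hwu, hmax⟩ := mem_Rem.1 hw
  by_cases he : u.erase w = ∅
  · -- u = {w}; w must be []
    have hune : u ≠ ∅ := Finset.ne_empty_of_mem hwu
    have hr : ([] : Node N) ∈ u := root_mem hu hune
    have hwnil : w = [] := by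
      by_contra hne
      have hmem : ([] : Node N) ∈ u.erase w := Finset.mem_erase.2 ⟨fun h => hne h.symm, hr⟩
      rw [he] at hmem
      simp at hmem
    rw [he, leavesOf_empty]
    simp [hwnil]
  · have htree : IsTree (u.erase w) := isTree_erase_rem hu hw
    have hroot : ([] : Node N) ∈ u.erase w := root_mem htree he
    have hwne : w ≠ [] := by
      rintro rfl
      exact (Finset.mem_erase.1 hroot).1 rfl
    rw [leavesOf_of_ne he]
    refine Finset.mem_sdiff.2 ⟨?_, by simp⟩
    refine Finset.mem_biUnion.2 ⟨w.dropLast, ?_, ?_⟩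
    · refine Finset.mem_erase.2 ⟨?_, hu w hwu _ _ (List.dropLast_append_getLast hwne).symm⟩
      intro h
      have := congrArg List.length (h ▸ (List.dropLast_append_getLast hwne))
      simp [List.length_dropLast] at this
    · exact Finset.mem_image.2 ⟨w.getLast hwne, Finset.mem_univ _,
        List.dropLast_append_getLast hwne⟩

/-- the key equivalence between "inserting a leaf yields `u`" and "erasing a maximal node". -/
lemma leaf_insert_equiv {s u : Finset (Node N)} (hs : IsTree s) (hu : IsTree u) {v : Node N} :
    (v ∈ leavesOf s ∧ insert v s = u) ↔ (v ∈ Rem u ∧ u.erase v = s) := by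
  constructor
  · rintro ⟨hv, rfl⟩
    have hvs : v ∉ s := leaf_not_mem hv
    refine ⟨mem_Rem.2 ⟨Finset.mem_insert_self _ _, fun j hj => ?_⟩, ?_⟩
    · rcases Finset.mem_insert.1 hj with h | h
      · have := congrArg List.length h
        simp at this
      · exact hvs (hs _ h v j rfl)
    · rw [Finset.erase_insert hvs]
  · rintro ⟨hv, rfl⟩
    obtain ⟨hvu, -⟩ := mem_Rem.1 hv
    exact ⟨rem_mem_leavesOf_erase hu hv, Finset.insert_erase hvu⟩

open scoped Classical in
/-- recursion for the number of histories of a fixed tree. -/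
lemma Ccount_succ {m : ℕ} {u : Finset (Node N)} (hu : IsTree u) :
    Ccount N (m + 1) u = ∑ w ∈ Rem u, Ccount N m (u.erase w) := by
  classical
  have hbi : histSet N (m + 1)
      = (histSet N m).biUnion fun l => (leavesOf l.toFinset).image (· :: l) := rfl
  rw [Ccount, hbi, Finset.filter_biUnion, Finset.card_biUnion]
  · have hstep : ∀ l ∈ histSet N m,
        (Finset.filter (fun l' => l'.toFinset = u) ((leavesOf l.toFinset).image (· :: l))).card
        = ∑ w ∈ Rem u, if u.erase w = l.toFinset then 1 else 0 := by
      intro l hl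
      rw [Finset.filter_image, Finset.card_image_of_injective _
        (fun a b h => (List.cons.injEq .. ▸ h).1)]
      have : Finset.filter (fun v => (v :: l).toFinset = u) (leavesOf l.toFinset)
          = Finset.filter (fun v => u.erase v = l.toFinset) (Rem u) := by
        ext v
        simp only [Finset.mem_filter, List.toFinset_cons]
        constructor
        · rintro ⟨h1, h2⟩
          obtain ⟨h3, h4⟩ := (leaf_insert_equiv (histSet_tree hl) hu).1 ⟨h1, h2⟩
          exact ⟨h3, h4⟩
        · rintro ⟨h1, h2⟩
          obtain ⟨h3, h4⟩ := (leaf_insert_equiv (histSet_tree hl) hu).2 ⟨h1, h2⟩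
          exact ⟨h3, h4⟩
      rw [this, Finset.card_filter]
    rw [Finset.sum_congr rfl hstep, Finset.sum_comm]
    refine Finset.sum_congr rfl fun w _ => ?_
    rw [Ccount, Finset.card_filter]
    refine Finset.sum_congr rfl fun l _ => ?_
    simp [eq_comm]
  · intro x hx y hy hxy
    refine Finset.disjoint_filter_filter ?_
    simp only [Finset.disjoint_left, Finset.mem_image]
    rintro a ⟨v, -, rfl⟩ ⟨z, -, h⟩
    exact hxy ((List.cons.injEq .. ▸ h).2).symm

/-- splitting the count over `histSet (n+1)` by the subtree receiving the new leaf. -/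
lemma split_count (hn : 1 ≤ n) (p : Finset (Node N) → Prop) [DecidablePred p] :
    ((histSet N (n + 1)).filter fun l => p l.toFinset).card
      = ∑ l ∈ histSet N n, ∑ j : Fin N,
          ((leavesOf (subtree l.toFinset j)).filter
            fun w => p (insert (j :: w) l.toFinset)).card := by
  classical
  have hbi : histSet N (n + 1)
      = (histSet N n).biUnion fun l => (leavesOf l.toFinset).image (· :: l) := rfl
  rw [hbi, Finset.filter_biUnion, Finset.card_biUnion]
  · refine Finset.sum_congr rfl fun l hl => ?_
    rw [Finset.filter_image, Finset.card_image_of_injective _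
      (fun a b h => (List.cons.injEq .. ▸ h).1)]
    have hroot := histSet_root hn hl
    have htree := histSet_tree hl
    -- partition the filtered leaf set by head
    set t := Finset.filter (fun v => p ((v :: l).toFinset)) (leavesOf l.toFinset) with ht
    have hsplit : t = Finset.univ.biUnion
        fun j : Fin N => t.filter (fun v => v.head? = some j) := by
      ext v
      simp only [Finset.mem_biUnion, Finset.mem_univ, true_and, Finset.mem_filter]
      constructor
      · intro hv
        have hne : v ≠ [] := ne_nil_of_mem_leavesOf hroot (Finset.mem_filter.1 hv).1
        cases v with
        | nil => exact absurd rfl hne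
        | cons a w => exact ⟨a, hv, rfl⟩
      · rintro ⟨j, hv, -⟩; exact hv
    rw [hsplit, Finset.card_biUnion]
    · refine Finset.sum_congr rfl fun j _ => ?_
      have : t.filter (fun v => v.head? = some j)
          = ((leavesOf (subtree l.toFinset j)).filter
              fun w => p (insert (j :: w) l.toFinset)).image (j :: ·) := by
        rw [ht, Finset.filter_comm, leavesOf_filter_head htree hroot j, Finset.filter_image]
        congr 1
        ext w
        simp only [Finset.mem_filter, List.toFinset_cons]
      rw [this, Finset.card_image_of_injective _ (fun a b h => (List.cons.injEq .. ▸ h).2)]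
    · intro x _ y _ hxy
      simp only [Finset.disjoint_left, Finset.mem_filter]
      rintro a ⟨-, h1⟩ ⟨-, h2⟩
      rw [h1] at h2
      exact hxy (Option.some.inj h2)
  · intro x hx y hy hxy
    refine Finset.disjoint_filter_filter ?_
    simp only [Finset.disjoint_left, Finset.mem_image]
    rintro a ⟨v, -, rfl⟩ ⟨z, -, h⟩
    exact hxy ((List.cons.injEq .. ▸ h).2).symm







open scoped Classical in
noncomputable def Acount (N : ℕ) (k : ℕ) (i : Fin N → ℕ) : ℕ :=
  ((histSet N k).filter fun l => ∀ j, (subtree l.toFinset j).card = i j).card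

lemma histSet_one : histSet N 1 = {[([] : Node N)]} := by
  show ({([] : List (Node N))} : Finset _).biUnion _ = _
  ext l
  simp [leavesOf_empty]

lemma subtree_card_insert_leaf {s : Finset (Node N)} {j j' : Fin N} {w : Node N}
    (hw : w ∈ leavesOf (subtree s j)) :
    (subtree (insert (j :: w) s) j').card
      = if j' = j then (subtree s j').card + 1 else (subtree s j').card := by
  rw [subtree_insert_cons]
  split_ifs with h
  · subst h
    exact Finset.card_insert_of_notMem (leaf_not_mem hw)
  · rfl

lemma G1 (hN : 1 ≤ N) : ∀ k, 1 ≤ k → ∀ i : Fin N → ℕ, (∑ j, i j = k - 1) →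
    Acount N k i * ∏ j, (i j).factorial
      = (k - 1).factorial * ∏ j, ∏ m ∈ Finset.range (i j), nleaves N m := by
  classical
  refine Nat.le_induction ?_ ?_
  · -- base k = 1
    intro i hi
    simp only [Nat.sub_self, Finset.sum_eq_zero_iff, Finset.mem_univ, true_implies] at hi
    have hA : Acount N 1 i = 1 := by
      rw [Acount, histSet_one]
      rw [Finset.filter_singleton, if_pos]
      · rfl
      · intro j
        show (subtree ([([] : Node N)] : List (Node N)).toFinset j).card = i j
        have : ([([] : Node N)] : List (Node N)).toFinset = {([] : Node N)} := by simp
        rw [this, subtree_singleton_root, hi j]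
        rfl
    simp [hA, hi]
  · -- step
    intro n hn ih i hi
    simp only [Nat.add_sub_cancel] at hi ⊢
    -- the modified size vector
    set i' : Fin N → Fin N → ℕ := fun j j' => if j' = j then i j - 1 else i j' with hi'
    have hsplit := split_count (N := N) hn (fun s' => ∀ j', (subtree s' j').card = i j')
    rw [Acount, hsplit]
    -- compute inner counts
    have hinner : ∀ l ∈ histSet N n, ∀ j : Fin N,
        ((leavesOf (subtree l.toFinset j)).filter
          fun w => ∀ j', (subtree (insert (j :: w) l.toFinset) j').card = i j').card
        = if (∀ j', (subtree l.toFinset j').card = i' j j') ∧ 1 ≤ i j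
            then nleaves N (i j - 1) else 0 := by
      intro l hl j
      have hsubt := fun j' => isTree_subtree (histSet_tree hl) j'
      by_cases hc : (∀ j', (subtree l.toFinset j').card = i' j j') ∧ 1 ≤ i j
      · rw [if_pos hc]
        have hfil : (leavesOf (subtree l.toFinset j)).filter
            (fun w => ∀ j', (subtree (insert (j :: w) l.toFinset) j').card = i j')
            = leavesOf (subtree l.toFinset j) := by
          refine Finset.filter_true_of_mem fun w hw => ?_
          intro j'
          rw [subtree_card_insert_leaf hw]
          have := hc.1 j'
          by_cases h : j' = j <;> simp [h, hi'] at this ⊢ <;> omega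
        rw [hfil, card_leavesOf hN (hsubt j)]
        have := hc.1 j
        simp [hi'] at this
        rw [this]
      · rw [if_neg hc]
        rw [Finset.card_eq_zero, Finset.filter_eq_empty_iff]
        intro w hw hcond
        apply hc
        have hcard := fun j' => (subtree_card_insert_leaf (s := l.toFinset) (j' := j') hw) ▸ hcond j'
        constructor
        · intro j'
          have := hcond j'
          rw [subtree_card_insert_leaf hw] at this
          by_cases h : j' = j <;> simp [h, hi'] at this ⊢ <;> omega
        · have := hcond j
          rw [subtree_card_insert_leaf hw, if_pos rfl] at this
          omega
    -- rewrite double sum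
    have hsum : ∑ l ∈ histSet N n, ∑ j : Fin N,
        ((leavesOf (subtree l.toFinset j)).filter
          fun w => ∀ j', (subtree (insert (j :: w) l.toFinset) j').card = i j').card
        = ∑ j : Fin N, (if 1 ≤ i j then nleaves N (i j - 1) * Acount N n (i' j) else 0) := by
      rw [Finset.sum_congr rfl fun l hl => Finset.sum_congr rfl fun j _ => hinner l hl j,
        Finset.sum_comm]
      refine Finset.sum_congr rfl fun j _ => ?_
      by_cases hij : 1 ≤ i j
      · rw [if_pos hij]
        rw [Acount, Finset.card_filter, Finset.mul_sum]
        refine Finset.sum_congr rfl fun l hl => ?_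
        by_cases hc : ∀ j', (subtree l.toFinset j').card = i' j j'
        · rw [if_pos ⟨hc, hij⟩, if_pos hc, mul_one]
        · rw [if_neg (fun h => hc h.1), if_neg hc, mul_zero]
      · rw [if_neg hij]
        refine Finset.sum_eq_zero fun l hl => ?_
        rw [if_neg (fun h => hij h.2)]
    rw [hsum, Finset.sum_mul]
    -- per-j identity
    have hterm : ∀ j : Fin N,
        (if 1 ≤ i j then nleaves N (i j - 1) * Acount N n (i' j) else 0) * ∏ j', (i j').factorial
        = i j * ((n - 1).factorial * ∏ j', ∏ m ∈ Finset.range (i j'), nleaves N m) := by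
      intro j
      by_cases hij : 1 ≤ i j
      · rw [if_pos hij]
        have hsum' : ∑ j', i' j j' = n - 1 := by
          have h1 : ∑ j', i' j j' = i' j j + ∑ j' ∈ Finset.univ.erase j, i' j j' :=
            (Finset.add_sum_erase _ _ (Finset.mem_univ j)).symm
          have h2 : ∑ j', i j' = i j + ∑ j' ∈ Finset.univ.erase j, i j' :=
            (Finset.add_sum_erase _ _ (Finset.mem_univ j)).symm
          have h3 : ∑ j' ∈ Finset.univ.erase j, i' j j' = ∑ j' ∈ Finset.univ.erase j, i j' :=
            Finset.sum_congr rfl fun j' hj' => by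
              simp [hi', (Finset.mem_erase.1 hj').1]
          have h4 : i' j j = i j - 1 := by simp [hi']
          omega
        have hIH := ih (i' j) hsum'
        -- decompose products
        have hfac : ∏ j', (i j').factorial
            = i j * ∏ j', (i' j j').factorial := by
          rw [← Finset.mul_prod_erase _ _ (Finset.mem_univ j),
            ← Finset.mul_prod_erase _ (fun j' => (i' j j').factorial) (Finset.mem_univ j)]
          have he : ∏ j' ∈ Finset.univ.erase j, (i' j j').factorial
              = ∏ j' ∈ Finset.univ.erase j, (i j').factorial :=
            Finset.prod_congr rfl fun j' hj' => by
              simp [hi', (Finset.mem_erase.1 hj').1]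
          rw [he]
          have : (i j).factorial = i j * (i j - 1).factorial := by
            rw [Nat.mul_factorial_pred (by omega : i j ≠ 0)]
          rw [this, hi']
          simp [mul_assoc]
        have hprod : nleaves N (i j - 1) * ∏ j', ∏ m ∈ Finset.range (i' j j'), nleaves N m
            = ∏ j', ∏ m ∈ Finset.range (i j'), nleaves N m := by
          rw [← Finset.mul_prod_erase _ (fun j' => ∏ m ∈ Finset.range (i' j j'), nleaves N m)
              (Finset.mem_univ j),
            ← Finset.mul_prod_erase _ (fun j' => ∏ m ∈ Finset.range (i j'), nleaves N m)
              (Finset.mem_univ j)]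
          have he : ∏ j' ∈ Finset.univ.erase j, ∏ m ∈ Finset.range (i' j j'), nleaves N m
              = ∏ j' ∈ Finset.univ.erase j, ∏ m ∈ Finset.range (i j'), nleaves N m :=
            Finset.prod_congr rfl fun j' hj' => by
              simp [hi', (Finset.mem_erase.1 hj').1]
          rw [he, ← mul_assoc]
          congr 1
          simp only [hi', if_pos rfl]
          have : i j = (i j - 1) + 1 := by omega
          rw [this, Finset.prod_range_succ, Nat.add_sub_cancel]
          ring
        calc nleaves N (i j - 1) * Acount N n (i' j) * ∏ j', (i j').factorial
            = i j * (nleaves N (i j - 1) * (Acount N n (i' j) * ∏ j', (i' j j').factorial)) := by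
              rw [hfac]; ring
          _ = i j * (nleaves N (i j - 1) * ((n - 1).factorial
                * ∏ j', ∏ m ∈ Finset.range (i' j j'), nleaves N m)) := by rw [hIH]
          _ = i j * ((n - 1).factorial
                * (nleaves N (i j - 1) * ∏ j', ∏ m ∈ Finset.range (i' j j'), nleaves N m)) := by
              ring
          _ = _ := by rw [hprod]
      · rw [if_neg hij]
        have : i j = 0 := by omega
        simp [this]
    rw [Finset.sum_congr rfl fun j _ => hterm j, ← Finset.sum_mul, hi,
      ← Nat.mul_factorial_pred (by omega : n ≠ 0), mul_assoc]







open scoped Classical in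
noncomputable def Bcount (N : ℕ) (k : ℕ) (t : Fin N → Finset (Node N)) : ℕ :=
  ((histSet N k).filter fun l => ∀ j, subtree l.toFinset j = t j).card

lemma Ccount_zero_empty : Ccount N 0 (∅ : Finset (Node N)) = 1 := by
  rw [Ccount]
  show (Finset.filter _ {([] : List (Node N))}).card = 1
  rw [Finset.filter_singleton, if_pos (by simp)]
  rfl

lemma G2 (hN : 1 ≤ N) : ∀ k, 1 ≤ k → ∀ t : Fin N → Finset (Node N),
    (∀ j, IsTree (t j)) → (k = 1 + ∑ j, (t j).card) →
    Bcount N k t * ∏ j, ((t j).card).factorial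
      = (k - 1).factorial * ∏ j, Ccount N ((t j).card) (t j) := by
  classical
  refine Nat.le_induction ?_ ?_
  · -- k = 1
    intro t htree hsum
    have hz : ∀ j, (t j).card = 0 := by
      intro j
      have h1 : ∑ j, (t j).card = 0 := by omega
      exact (Finset.sum_eq_zero_iff.1 h1) j (Finset.mem_univ j)
    have hte : ∀ j, t j = ∅ := fun j => Finset.card_eq_zero.1 (hz j)
    have hB : Bcount N 1 t = 1 := by
      rw [Bcount, histSet_one, Finset.filter_singleton, if_pos]
      · rfl
      · intro j
        have : ([([] : Node N)] : List (Node N)).toFinset = {([] : Node N)} := by simp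
        rw [this, subtree_singleton_root, hte j]
    simp [hB, hz, hte, Ccount_zero_empty]
  · -- step
    intro n hn ih t htree hsum
    simp only [Nat.add_sub_cancel]
    have hsum' : ∑ j, (t j).card = n := by omega
    -- updated tuple after erasing w from t j
    set t' : Fin N → Node N → Fin N → Finset (Node N) :=
      fun j w j' => if j' = j then (t j).erase w else t j' with ht'
    have hsplit := split_count (N := N) hn (fun s' => ∀ j', subtree s' j' = t j')
    rw [Bcount, hsplit]
    -- inner filter identification
    have hinner : ∀ l ∈ histSet N n, ∀ j : Fin N,
        ((leavesOf (subtree l.toFinset j)).filter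
          fun w => ∀ j', subtree (insert (j :: w) l.toFinset) j' = t j')
        = (Rem (t j)).filter fun w => ∀ j', subtree l.toFinset j' = t' j w j' := by
      intro l hl j
      have hsubt : IsTree (subtree l.toFinset j) := isTree_subtree (histSet_tree hl) j
      ext w
      simp only [Finset.mem_filter]
      constructor
      · rintro ⟨hw, hcond⟩
        have hj := hcond j
        rw [subtree_insert_cons, if_pos rfl] at hj
        obtain ⟨hrem, herase⟩ := (leaf_insert_equiv hsubt (htree j)).1 ⟨hw, hj⟩
        refine ⟨hrem, fun j' => ?_⟩
        by_cases h : j' = j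
        · subst h
          rw [ht']
          simp [herase.symm]
        · have := hcond j'
          rw [subtree_insert_cons, if_neg h] at this
          rw [ht']
          simp [h, this]
      · rintro ⟨hrem, hcond⟩
        have hj := hcond j
        rw [ht'] at hj
        simp only [if_pos rfl] at hj
        obtain ⟨hw, hins⟩ := (leaf_insert_equiv hsubt (htree j)).2 ⟨hrem, hj.symm⟩
        refine ⟨hw, fun j' => ?_⟩
        rw [subtree_insert_cons]
        by_cases h : j' = j
        · subst h; rw [if_pos rfl, hins]
        · rw [if_neg h]
          have := hcond j'
          rw [ht'] at this
          simpa [h] using this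
    -- turn into sums of Bcounts
    have hsum2 : ∑ l ∈ histSet N n, ∑ j : Fin N,
        ((leavesOf (subtree l.toFinset j)).filter
          fun w => ∀ j', subtree (insert (j :: w) l.toFinset) j' = t j').card
        = ∑ j : Fin N, ∑ w ∈ Rem (t j), Bcount N n (t' j w) := by
      rw [Finset.sum_congr rfl fun l hl => Finset.sum_congr rfl fun j _ =>
        congrArg Finset.card (hinner l hl j), Finset.sum_comm]
      refine Finset.sum_congr rfl fun j _ => ?_
      rw [Finset.sum_congr rfl fun l _ => Finset.card_filter _ _, Finset.sum_comm]
      refine Finset.sum_congr rfl fun w _ => ?_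
      rw [Bcount, Finset.card_filter]
    rw [hsum2, Finset.sum_mul]
    -- per-j computation
    have hterm : ∀ j : Fin N,
        (∑ w ∈ Rem (t j), Bcount N n (t' j w)) * ∏ j', ((t j').card).factorial
        = (t j).card * ((n - 1).factorial * ∏ j', Ccount N ((t j').card) (t j')) := by
      intro j
      by_cases hcj : (t j).card = 0
      · have hte : t j = ∅ := Finset.card_eq_zero.1 hcj
        have hre : Rem (t j) = ∅ := by simp [hte, Rem]
        simp [hre, hcj]
      · have hcj1 : 1 ≤ (t j).card := by omega
        -- per w
        have hw : ∀ w ∈ Rem (t j),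
            Bcount N n (t' j w) * ∏ j', ((t j').card).factorial
            = (t j).card * ((n - 1).factorial
                * (Ccount N ((t j).card - 1) ((t j).erase w)
                    * ∏ j' ∈ Finset.univ.erase j, Ccount N ((t j').card) (t j'))) := by
          intro w hwRem
          have hwmem : w ∈ t j := (mem_Rem.1 hwRem).1
          have htree' : ∀ j', IsTree (t' j w j') := by
            intro j'
            rw [ht']
            by_cases h : j' = j
            · simp only [h, if_pos rfl]
              exact isTree_erase_rem (htree j) hwRem
            · simp only [if_neg h]; exact htree j'
          have hcard' : ∀ j', (t' j w j').card
              = if j' = j then (t j).card - 1 else (t j').card := by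
            intro j'
            rw [ht']
            by_cases h : j' = j <;> simp [h, Finset.card_erase_of_mem hwmem]
          have hsum'' : n = 1 + ∑ j', (t' j w j').card := by
            have h1 : ∑ j', (t' j w j').card = ∑ j', (if j' = j then (t j).card - 1 else (t j').card) :=
              Finset.sum_congr rfl fun j' _ => hcard' j'
            have h2 : ∑ j', (if j' = j then (t j).card - 1 else (t j').card)
                = ((t j).card - 1) + ∑ j' ∈ Finset.univ.erase j, (t j').card := by
              rw [← Finset.add_sum_erase _ _ (Finset.mem_univ j), if_pos rfl]
              congr 1
              exact Finset.sum_congr rfl fun j' hj' => by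
                rw [if_neg (Finset.mem_erase.1 hj').1]
            have h3 : ∑ j', (t j').card = (t j).card + ∑ j' ∈ Finset.univ.erase j, (t j').card :=
              (Finset.add_sum_erase _ _ (Finset.mem_univ j)).symm
            omega
          have hIH := ih (t' j w) htree' hsum''
          -- factorial product decomposition
          have hfac : ∏ j', ((t j').card).factorial
              = (t j).card * ∏ j', ((t' j w j').card).factorial := by
            rw [← Finset.mul_prod_erase _ _ (Finset.mem_univ j),
              ← Finset.mul_prod_erase _ (fun j' => ((t' j w j').card).factorial) (Finset.mem_univ j)]
            have he : ∏ j' ∈ Finset.univ.erase j, ((t' j w j').card).factorial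
                = ∏ j' ∈ Finset.univ.erase j, ((t j').card).factorial :=
              Finset.prod_congr rfl fun j' hj' => by
                rw [hcard' j', if_neg (Finset.mem_erase.1 hj').1]
            rw [he, hcard' j, if_pos rfl, ← mul_assoc, Nat.mul_factorial_pred (by omega : (t j).card ≠ 0)]
          have hCprod : ∏ j', Ccount N ((t' j w j').card) (t' j w j')
              = Ccount N ((t j).card - 1) ((t j).erase w)
                * ∏ j' ∈ Finset.univ.erase j, Ccount N ((t j').card) (t j') := by
            rw [← Finset.mul_prod_erase _ (fun j' => Ccount N ((t' j w j').card) (t' j w j'))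
              (Finset.mem_univ j)]
            congr 1
            · rw [hcard' j, if_pos rfl, ht']
              simp
            · exact Finset.prod_congr rfl fun j' hj' => by
                rw [hcard' j', if_neg (Finset.mem_erase.1 hj').1, ht']
                simp [(Finset.mem_erase.1 hj').1]
          calc Bcount N n (t' j w) * ∏ j', ((t j').card).factorial
              = (t j).card * (Bcount N n (t' j w) * ∏ j', ((t' j w j').card).factorial) := by
                rw [hfac]; ring
            _ = (t j).card * ((n - 1).factorial * ∏ j', Ccount N ((t' j w j').card) (t' j w j')) := by
                rw [hIH]
            _ = _ := by rw [hCprod]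
        have hCrec : ∑ w ∈ Rem (t j), Ccount N ((t j).card - 1) ((t j).erase w)
            = Ccount N ((t j).card) (t j) := by
          have h := Ccount_succ (N := N) (m := (t j).card - 1) (htree j)
          rw [show (t j).card - 1 + 1 = (t j).card from by omega] at h
          exact h.symm
        rw [Finset.sum_mul, Finset.sum_congr rfl hw, ← Finset.mul_sum, ← Finset.mul_sum,
          ← Finset.sum_mul, hCrec,
          ← Finset.mul_prod_erase _ (fun j' => Ccount N ((t j').card) (t j'))
            (Finset.mem_univ j)]
    rw [Finset.sum_congr rfl fun j _ => hterm j, ← Finset.sum_mul, hsum',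
      ← Nat.mul_factorial_pred (by omega : n ≠ 0), mul_assoc]



open MeasureTheory ProbabilityTheory






lemma nleaves_cast_ne_zero {m : ℕ} : ((nleaves N m : ℝ≥0∞)) ≠ 0 := by
  simp [nleaves]

lemma prod_nleaves_inv (k : ℕ) :
    ∏ r ∈ Finset.range k, ((nleaves N r : ℝ≥0∞))⁻¹
      = ((∏ r ∈ Finset.range k, nleaves N r : ℕ) : ℝ≥0∞)⁻¹ := by
  induction k with
  | zero => simp
  | succ k ih =>
    rw [Finset.prod_range_succ, ih, Finset.prod_range_succ, Nat.cast_mul,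
      ENNReal.mul_inv
        (Or.inl (Nat.cast_ne_zero.2 (Finset.prod_ne_zero_iff.2 fun r _ => by simp [nleaves])))
        (Or.inl (ENNReal.natCast_ne_top _))]

open scoped Classical in
/-- Master lemma: probability of any event depending only on `T k`. -/
lemma master {Ω : Type*} [MeasurableSpace Ω] (P : Measure Ω) [IsProbabilityMeasure P]
    (hN : 1 ≤ N)
    (T : ℕ → Ω → Finset (Node N))
    (hmeas : ∀ (k : ℕ) (s : Finset (Node N)), MeasurableSet {ω | T k ω = s})
    (hlaw : ∀ (n : ℕ) (s : ℕ → Finset (Node N)), s 0 = ∅ →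
      (∀ k < n, Step (s k) (s (k + 1))) →
      P {ω | ∀ k ≤ n, T k ω = s k} = ∏ k ∈ Finset.range n, ((nleaves N k : ℝ≥0∞))⁻¹)
    (k : ℕ) (Q : Finset (Node N) → Prop) :
    P {ω | Q (T k ω)}
      = (((histSet N k).filter fun l => Q l.toFinset).card : ℝ≥0∞)
          * ∏ r ∈ Finset.range k, ((nleaves N r : ℝ≥0∞))⁻¹ := by
  classical
  -- the elementary events
  set E : List (Node N) → Set Ω :=
    fun l => {ω | ∀ m ≤ k, T m ω = (l.drop (k - m)).toFinset} with hE
  -- each elementary event is measurable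
  have hEmeas : ∀ l, MeasurableSet (E l) := by
    intro l
    have : E l = ⋂ m ∈ Set.Iic k, {ω | T m ω = (l.drop (k - m)).toFinset} := by
      ext ω; simp [hE, Set.mem_iInter]
    rw [this]
    exact MeasurableSet.biInter (Set.to_countable _) fun m _ => hmeas m _
  -- probability of elementary events
  have hEP : ∀ l ∈ histSet N k,
      P (E l) = ∏ r ∈ Finset.range k, ((nleaves N r : ℝ≥0∞))⁻¹ := by
    intro l hl
    refine hlaw k (fun m => (l.drop (k - m)).toFinset) ?_ ?_
    · show (l.drop (k - 0)).toFinset = ∅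
      rw [Nat.sub_zero, ← histSet_length hl, List.drop_length]
      rfl
    · intro m hm
      have hd : l.drop (k - (m + 1)) ∈ histSet N (m + 1) := by
        have := drop_mem_histSet hl (k - (m + 1))
        rwa [show k - (k - (m + 1)) = m + 1 by omega] at this
      obtain ⟨v, l0, hl0, hv, hcons⟩ := mem_histSet_succ.1 hd
      have htail : l.drop (k - m) = l0 := by
        have h1 : l.drop (k - m) = (l.drop (k - (m + 1))).drop 1 := by
          rw [List.drop_drop, show k - (m + 1) + 1 = k - m by omega]
        rw [h1, hcons, List.drop_one, List.tail_cons]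
      refine ⟨v, ?_, ?_⟩
      · show v ∈ leavesOf (l.drop (k - m)).toFinset
        rw [htail]; exact hv
      · show (l.drop (k - (m + 1))).toFinset = insert v (l.drop (k - m)).toFinset
        rw [hcons, List.toFinset_cons, htail]
  -- disjointness
  have hdisj : (↑(histSet N k) : Set (List (Node N))).PairwiseDisjoint E := by
    intro l hl l' hl' hne
    simp only [Function.onFun, Set.disjoint_left]
    intro ω hω hω'
    refine hne (histSet_ext hl hl' fun m => ?_)
    by_cases hmk : m ≤ k
    · have h1 := hω (k - m) (by omega)
      have h2 := hω' (k - m) (by omega)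
      rw [show k - (k - m) = m by omega] at h1 h2
      rw [← h1, ← h2]
    · rw [List.drop_eq_nil_of_le, List.drop_eq_nil_of_le]
      · rw [histSet_length hl']; omega
      · rw [histSet_length hl]; omega
  -- full union
  set U : Set Ω := ⋃ l ∈ histSet N k, E l with hU
  have hUmeas : MeasurableSet U := by
    exact MeasurableSet.biUnion (Set.to_countable _) fun l _ => hEmeas l
  have hPU : P U = 1 := by
    rw [hU, measure_biUnion_finset hdisj fun l _ => hEmeas l,
      Finset.sum_congr rfl hEP, Finset.sum_const, nsmul_eq_mul, card_histSet hN,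
      prod_nleaves_inv, Nat.cast_prod]
    rw [← Nat.cast_prod, ENNReal.mul_inv_cancel]
    · exact Nat.cast_ne_zero.2 (Finset.prod_ne_zero_iff.2 fun r _ => by simp [nleaves])
    · exact ENNReal.natCast_ne_top _
  -- reduce to the union
  set A : Set Ω := {ω | Q (T k ω)} with hA
  have hAU : P A = P (A ∩ U) := by
    refine le_antisymm ?_ (measure_mono Set.inter_subset_left)
    calc P A ≤ P (A ∩ U) + P (A \ U) := measure_le_inter_add_diff P A U
      _ ≤ P (A ∩ U) + P Uᶜ := by
          gcongr
          exact fun ω hω => hω.2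
      _ = P (A ∩ U) := by
          rw [prob_compl_eq_one_sub hUmeas, hPU]
          simp
  have hAE : A ∩ U = ⋃ l ∈ (histSet N k).filter fun l => Q l.toFinset, E l := by
    ext ω
    simp only [hU, Set.mem_inter_iff, Set.mem_iUnion, Finset.mem_filter, Finset.mem_coe,
      exists_prop]
    constructor
    · rintro ⟨hQA, l, hl, hωl⟩
      have : T k ω = l.toFinset := by
        have := hωl k le_rfl
        rwa [Nat.sub_self, List.drop_zero] at this
      exact ⟨l, ⟨hl, by rwa [hA, Set.mem_setOf_eq, this] at hQA⟩, hωl⟩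
    · rintro ⟨l, ⟨hl, hQl⟩, hωl⟩
      have hTk : T k ω = l.toFinset := by
        have := hωl k le_rfl
        rwa [Nat.sub_self, List.drop_zero] at this
      exact ⟨by rw [hA, Set.mem_setOf_eq, hTk]; exact hQl, ⟨l, hl, hωl⟩⟩
  rw [hAU, hAE, measure_biUnion_finset
      (hdisj.subset (by simp only [Finset.coe_filter]; exact fun x hx => hx.1))
      (fun l _ => hEmeas l),
    Finset.sum_congr rfl fun l hl => hEP l (Finset.mem_filter.1 hl).1,
    Finset.sum_const, nsmul_eq_mul]








lemma cast_prod_inv {α : Type*} (s : Finset α) (g : α → ℕ) (hg : ∀ x ∈ s, g x ≠ 0) :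
    ∏ x ∈ s, ((g x : ℝ≥0∞))⁻¹ = ((∏ x ∈ s, g x : ℕ) : ℝ≥0∞)⁻¹ := by
  classical
  induction s using Finset.induction_on with
  | empty => simp
  | insert a s' hx ih =>
    rw [Finset.prod_insert hx, Finset.prod_insert hx,
      ih fun x hxs => hg x (Finset.mem_insert_of_mem hxs), Nat.cast_mul,
      ENNReal.mul_inv
        (Or.inl (Nat.cast_ne_zero.2 (hg a (Finset.mem_insert_self a s'))))
        (Or.inl (ENNReal.natCast_ne_top _))]


/-- For a random `N`-ary recursive tree process `(T_k)`, the vector of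
root-subtree sizes of `T_k` has law `p_k`, and conditionally on the subtree sizes the `N`
root subtrees are independent random recursive trees of the given sizes. -/
theorem statement0 {Ω : Type*} [MeasurableSpace Ω] (P : Measure Ω) [IsProbabilityMeasure P]
    (N : ℕ) (hN : 2 ≤ N)
    (T : ℕ → Ω → Finset (Node N))
    (hmeas : ∀ (k : ℕ) (s : Finset (Node N)), MeasurableSet {ω | T k ω = s})
    (hinit : ∀ ω, T 0 ω = ∅)
    (hlaw : ∀ (n : ℕ) (s : ℕ → Finset (Node N)), s 0 = ∅ →
      (∀ k < n, Step (s k) (s (k + 1))) →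
      P {ω | ∀ k ≤ n, T k ω = s k} = ∏ k ∈ Finset.range n, ((nleaves N k : ℝ≥0∞))⁻¹)
    (k : ℕ) (hk : 1 ≤ k) (i : Fin N → ℕ) (hi : ∑ j, i j = k - 1) :
    P {ω | ∀ j, (subtree (T k ω) j).card = i j} = pk N k i ∧
    ∀ t : Fin N → Finset (Node N), (∀ j, IsTree (t j)) → (∀ j, (t j).card = i j) →
      ProbabilityTheory.cond P {ω | ∀ j, (subtree (T k ω) j).card = i j}
          {ω | ∀ j, subtree (T k ω) j = t j}
        = ∏ j, P {ω | T (i j) ω = t j} := by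
  classical
  have hN1 : 1 ≤ N := by omega
  -- abbreviations
  set F : ℕ := ∏ j, (i j).factorial with hF
  set FFn : ℕ := ∏ j, ∏ m ∈ Finset.range (i j), nleaves N m with hFFn
  set Pf : ℕ := ∏ r ∈ Finset.range k, nleaves N r with hPf
  have hF0 : F ≠ 0 := Finset.prod_ne_zero_iff.2 fun j _ => (Nat.factorial_pos _).ne'
  have hFFn0 : FFn ≠ 0 := Finset.prod_ne_zero_iff.2 fun j _ =>
    Finset.prod_ne_zero_iff.2 fun m _ => by simp [nleaves]
  have hPf0 : Pf ≠ 0 := Finset.prod_ne_zero_iff.2 fun r _ => by simp [nleaves]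
  have hG1 : Acount N k i * F = (k - 1).factorial * FFn := G1 hN1 k hk i hi
  have hAc0 : Acount N k i ≠ 0 := by
    intro h
    rw [h, zero_mul] at hG1
    exact (Nat.mul_ne_zero (Nat.factorial_pos _).ne' hFFn0) hG1.symm
  -- probability of the size event
  have hPA : P {ω | ∀ j, (subtree (T k ω) j).card = i j}
      = (Acount N k i : ℝ≥0∞) * ((Pf : ℕ) : ℝ≥0∞)⁻¹ := by
    rw [master P hN1 T hmeas hlaw k (fun s => ∀ j, (subtree s j).card = i j),
      prod_nleaves_inv]
    rw [show Acount N k i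
      = ((histSet N k).filter fun l => ∀ j, (subtree l.toFinset j).card = i j).card from rfl]
    congr!
  constructor
  · -- first claim
    rw [hPA, pk]
    have hnum : (Nat.factorial (k - 1) * ∏ l, ∏ m ∈ Finset.range (i l), nleaves N m)
        = Acount N k i * F := hG1.symm
    have hden : ((∏ l, Nat.factorial (i l)) * ∏ r ∈ Finset.range k, nleaves N r)
        = F * Pf := rfl
    rw [hnum, hden, ENNReal.eq_div_iff (Nat.cast_ne_zero.2 (Nat.mul_ne_zero hF0 hPf0))
      (ENNReal.natCast_ne_top _), Nat.cast_mul, Nat.cast_mul]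
    calc ((F : ℕ) : ℝ≥0∞) * (Pf : ℕ) * ((Acount N k i : ℝ≥0∞) * ((Pf : ℕ) : ℝ≥0∞)⁻¹)
        = ((Acount N k i : ℝ≥0∞) * (F : ℕ)) * (((Pf : ℕ) : ℝ≥0∞) * ((Pf : ℕ) : ℝ≥0∞)⁻¹) := by
          ring
      _ = (Acount N k i : ℝ≥0∞) * (F : ℕ) := by
          rw [ENNReal.mul_inv_cancel (Nat.cast_ne_zero.2 hPf0) (ENNReal.natCast_ne_top _),
            mul_one]
  · -- second claim
    intro t htree hcards
    set A : Set Ω := {ω | ∀ j, (subtree (T k ω) j).card = i j} with hA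
    set B : Set Ω := {ω | ∀ j, subtree (T k ω) j = t j} with hB
    have hsub : B ⊆ A := by
      intro ω hω j
      rw [Set.mem_setOf_eq] at hω
      rw [hω j, hcards j]
    have hAmeas : MeasurableSet A := by
      have : A = ⋃ s ∈ {s : Finset (Node N) | ∀ j, (subtree s j).card = i j},
          {ω | T k ω = s} := by
        ext ω
        simp only [Set.mem_iUnion, Set.mem_setOf_eq, exists_prop, hA]
        constructor
        · intro h; exact ⟨T k ω, h, rfl⟩
        · rintro ⟨s, hs, hTs⟩
          intro j
          rw [show T k ω = s from hTs]
          exact hs j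
      rw [this]
      exact MeasurableSet.biUnion (Set.to_countable _) fun s _ => hmeas k s
    -- counts
    have hksum : k = 1 + ∑ j, (t j).card := by
      have : ∑ j, (t j).card = ∑ j, i j := Finset.sum_congr rfl fun j _ => hcards j
      omega
    have hG2 : Bcount N k t * F = (k - 1).factorial * ∏ j, Ccount N (i j) (t j) := by
      have h := G2 hN1 k hk t htree hksum
      simp only [hcards] at h
      exact h
    set Cn : ℕ := ∏ j, Ccount N (i j) (t j) with hCn
    -- the crucial Nat identity
    have hkey : Bcount N k t * FFn = Acount N k i * Cn := by
      have h1 : (Bcount N k t * FFn) * F = (Acount N k i * Cn) * F := by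
        calc (Bcount N k t * FFn) * F = (Bcount N k t * F) * FFn := by ring
          _ = ((k - 1).factorial * Cn) * FFn := by rw [hG2]
          _ = ((k - 1).factorial * FFn) * Cn := by ring
          _ = (Acount N k i * F) * Cn := by rw [hG1]
          _ = (Acount N k i * Cn) * F := by ring
      exact Nat.eq_of_mul_eq_mul_right (Nat.pos_of_ne_zero hF0) h1
    -- probabilities
    have hPB : P B = (Bcount N k t : ℝ≥0∞) * ((Pf : ℕ) : ℝ≥0∞)⁻¹ := by
      rw [hB, master P hN1 T hmeas hlaw k (fun s => ∀ j, subtree s j = t j),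
        prod_nleaves_inv]
      rw [show Bcount N k t
        = ((histSet N k).filter fun l => ∀ j, subtree l.toFinset j = t j).card from rfl]
      congr!
    have hPT : ∀ j, P {ω | T (i j) ω = t j}
        = (Ccount N (i j) (t j) : ℝ≥0∞)
            * ((∏ r ∈ Finset.range (i j), nleaves N r : ℕ) : ℝ≥0∞)⁻¹ := by
      intro j
      rw [master P hN1 T hmeas hlaw (i j) (fun s => s = t j), prod_nleaves_inv]
      rw [show Ccount N (i j) (t j)
        = ((histSet N (i j)).filter fun l => l.toFinset = t j).card from rfl]
      congr!
    have hRHS : ∏ j, P {ω | T (i j) ω = t j}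
        = (Cn : ℝ≥0∞) * ((FFn : ℕ) : ℝ≥0∞)⁻¹ := by
      rw [Finset.prod_congr rfl fun j _ => hPT j, Finset.prod_mul_distrib, ← Nat.cast_prod,
        cast_prod_inv Finset.univ (fun j => ∏ r ∈ Finset.range (i j), nleaves N r)
          (fun j _ => Finset.prod_ne_zero_iff.2 fun m _ => by simp [nleaves])]
    rw [ProbabilityTheory.cond_apply hAmeas, Set.inter_eq_self_of_subset_right hsub, hPA, hPB,
      hRHS]
    rw [ENNReal.mul_inv (Or.inl (Nat.cast_ne_zero.2 hAc0)) (Or.inl (ENNReal.natCast_ne_top _)),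
      inv_inv]
    have hstep : ((Acount N k i : ℝ≥0∞))⁻¹ * ((Pf : ℕ) : ℝ≥0∞)
          * ((Bcount N k t : ℝ≥0∞) * ((Pf : ℕ) : ℝ≥0∞)⁻¹)
        = (Bcount N k t : ℝ≥0∞) * ((Acount N k i : ℝ≥0∞))⁻¹ := by
      calc ((Acount N k i : ℝ≥0∞))⁻¹ * ((Pf : ℕ) : ℝ≥0∞)
            * ((Bcount N k t : ℝ≥0∞) * ((Pf : ℕ) : ℝ≥0∞)⁻¹)
          = ((Bcount N k t : ℝ≥0∞) * ((Acount N k i : ℝ≥0∞))⁻¹)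
              * (((Pf : ℕ) : ℝ≥0∞) * ((Pf : ℕ) : ℝ≥0∞)⁻¹) := by ring
        _ = _ := by
            rw [ENNReal.mul_inv_cancel (Nat.cast_ne_zero.2 hPf0) (ENNReal.natCast_ne_top _),
              mul_one]
    rw [hstep, ← div_eq_mul_inv, ← div_eq_mul_inv,
      ENNReal.div_eq_div_iff (Nat.cast_ne_zero.2 hFFn0) (ENNReal.natCast_ne_top _)
        (Nat.cast_ne_zero.2 hAc0) (ENNReal.natCast_ne_top _)]
    have : FFn * Bcount N k t = Acount N k i * Cn := by rw [mul_comm]; exact hkey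
    exact_mod_cast this



end KacNary
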